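/- Let N, q ≥ 1 be integers, let a < b be positive odd integers, let a_{ij} ≥ 0 (1 ≤ i, j ≤ N) be symmetric weights (a_{ij} = a_{ji}), let d_i ≥ 0 (1 ≤ i ≤ N), and let x_1, …, x_N ∈ ℝ^q. Define ã_{ij} = a_{ij}^{2b/(3b−a)}, d̃_i = d_i^{2b/(3b−a)}, and Q̃(x) = (1/2)·∑_{i,j=1}^N ã_{ij}·‖x_i − x_j‖² + ∑_{i=1}^N d̃_i·‖x_i‖². Then ∑_{i=1}^N ⟨x_i, ∑_{j=1}^N a_{ij}·(x_i − x_j)^{(2b−a)/b} + d_i·x_i^{(2b−a)/b}⟩ ≥ (1/2)·(q(N+1)²)^{(a−b)/(2b)}·(2·Q̃(x))^{(3b−a)/(2b)}. -/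

import Mathlib

open Finset

/-- Signed power: `spow s r = sign s * |s| ^ r`, the real-valued odd-rational power. -/
noncomputable def spow (s r : ℝ) : ℝ := Real.sign s * |s| ^ r

lemma spow_neg (s r : ℝ) : spow (-s) r = - spow s r := by
  simp [spow, Real.sign_neg, neg_mul]

lemma mul_spow (s p : ℝ) (hp : 0 < p) : s * spow s p = |s| ^ (p + 1) := by
  by_cases hs : s = 0
  · subst hs
    simp [spow, Real.zero_rpow (by linarith : p + 1 ≠ 0)]
  · have habs : 0 < |s| := abs_pos.mpr hs
    have hsign : s * Real.sign s = |s| := by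
      rcases lt_or_gt_of_ne hs with h | h
      · rw [Real.sign_of_neg h, abs_of_neg h]; ring
      · rw [Real.sign_of_pos h, abs_of_pos h]; ring
    rw [spow, Real.rpow_add habs, Real.rpow_one]
    calc s * (Real.sign s * |s| ^ p) = (s * Real.sign s) * |s| ^ p := by ring
      _ = |s| * |s| ^ p := by rw [hsign]
      _ = |s| ^ p * |s| := by ring

lemma sum_rpow_bound {ι : Type*} [Fintype ι] (u : ι → ℝ) (hu : ∀ m, 0 ≤ u m)
    {r M : ℝ} (hr : 1 ≤ r) (hc0 : 0 < Fintype.card ι)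
    (hcard : (Fintype.card ι : ℝ) ≤ M) :
    (∑ m, u m) ^ r ≤ M ^ (r - 1) * ∑ m, (u m) ^ r := by
  set n : ℝ := (Fintype.card ι : ℝ) with hn
  have hn0 : 0 < n := by rw [hn]; exact_mod_cast hc0
  have h := Real.rpow_arith_mean_le_arith_mean_rpow Finset.univ (fun _ : ι => n⁻¹) u
    (fun i _ => by positivity) (by simp [Finset.sum_const, hn]; field_simp)
    (fun i _ => hu i) hr
  rw [← Finset.mul_sum, ← Finset.mul_sum, Real.mul_rpow (by positivity)
    (Finset.sum_nonneg fun i _ => hu i)] at h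
  have hstep : (∑ m, u m) ^ r ≤ n ^ (r - 1) * ∑ m, (u m) ^ r := by
    have h2 : n ^ r * (n⁻¹ ^ r * (∑ m, u m) ^ r) ≤ n ^ r * (n⁻¹ * ∑ m, (u m) ^ r) :=
      mul_le_mul_of_nonneg_left h (by positivity)
    have hcanc : n ^ r * n⁻¹ ^ r = 1 := by
      rw [← Real.mul_rpow hn0.le (by positivity), mul_inv_cancel₀ hn0.ne',
        Real.one_rpow]
    have hsub : n ^ r * n⁻¹ = n ^ (r - 1) := by
      rw [Real.rpow_sub hn0, Real.rpow_one]; ring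
    calc (∑ m, u m) ^ r = n ^ r * n⁻¹ ^ r * (∑ m, u m) ^ r := by rw [hcanc, one_mul]
      _ = n ^ r * (n⁻¹ ^ r * (∑ m, u m) ^ r) := by ring
      _ ≤ n ^ r * (n⁻¹ * ∑ m, (u m) ^ r) := h2
      _ = n ^ (r - 1) * ∑ m, (u m) ^ r := by rw [← mul_assoc, hsub]
  refine hstep.trans (mul_le_mul_of_nonneg_right ?_ ?_)
  · exact Real.rpow_le_rpow hn0.le hcard (by linarith)
  · exact Finset.sum_nonneg fun i _ => Real.rpow_nonneg (hu i) r

set_option maxHeartbeats 1000000 in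
theorem stmt_13 (N q a b : ℕ) (hN : 1 ≤ N) (hq : 1 ≤ q)
    (ha : Odd a) (hb : Odd b) (ha0 : 0 < a) (hab : a < b)
    (A : Fin N → Fin N → ℝ) (hA : ∀ i j, 0 ≤ A i j) (hAs : ∀ i j, A i j = A j i)
    (d : Fin N → ℝ) (hd : ∀ i, 0 ≤ d i)
    (x : Fin N → Fin q → ℝ) :
    ∑ i, ∑ k, x i k *
        ((∑ j, A i j * spow (x i k - x j k) ((2 * (b : ℝ) - a) / b)) +
          d i * spow (x i k) ((2 * (b : ℝ) - a) / b)) ≥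
      (1 / 2) * ((q : ℝ) * ((N : ℝ) + 1) ^ 2) ^ (((a : ℝ) - b) / (2 * b)) *
        (2 * ((1 / 2) * (∑ i, ∑ j,
            A i j ^ (2 * (b : ℝ) / (3 * (b : ℝ) - a)) * (∑ k, (x i k - x j k) ^ 2)) +
          ∑ i, d i ^ (2 * (b : ℝ) / (3 * (b : ℝ) - a)) * (∑ k, (x i k) ^ 2))) ^
          ((3 * (b : ℝ) - a) / (2 * b)) := by
  have ha0R : (0:ℝ) < a := by exact_mod_cast ha0
  have hbaR : (a:ℝ) < b := by exact_mod_cast hab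
  have hb0 : (0:ℝ) < b := ha0R.trans hbaR
  have h3 : (0:ℝ) < 3 * b - a := by linarith
  have h2 : (0:ℝ) < 2 * b - a := by linarith
  set p : ℝ := (2 * (b : ℝ) - a) / b with hpdef
  set e : ℝ := 2 * (b : ℝ) / (3 * (b : ℝ) - a) with hedef
  set r : ℝ := (3 * (b : ℝ) - a) / (2 * b) with hrdef
  have hp0 : 0 < p := by positivity
  have hr1 : 1 ≤ r := by
    rw [hrdef, le_div_iff₀ (by positivity)]; linarith
  have her : e * r = 1 := by
    rw [hedef, hrdef]; field_simp; exact div_self (ne_of_gt (by linarith))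
  have hpr : ((2:ℕ):ℝ) * r = p + 1 := by
    rw [hrdef, hpdef]; push_cast; field_simp; ring
  -- the terms of the quadratic form, as one family
  set w : (Fin N × Fin N × Fin q) ⊕ (Bool × Fin N × Fin q) → ℝ :=
    Sum.elim (fun m => A m.1 m.2.1 ^ e * (x m.1 m.2.2 - x m.2.1 m.2.2) ^ 2)
      (fun m => d m.2.1 ^ e * (x m.2.1 m.2.2) ^ 2) with hwdef
  have hw0 : ∀ m, 0 ≤ w m := by
    rintro (⟨i, j, k⟩ | ⟨t, i, k⟩)
    · exact mul_nonneg (Real.rpow_nonneg (hA i j) e) (sq_nonneg _)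
    · exact mul_nonneg (Real.rpow_nonneg (hd i) e) (sq_nonneg _)
  -- rpow computation for a single term
  have hterm : ∀ (c s : ℝ), 0 ≤ c → (c ^ e * s ^ 2) ^ r = c * |s| ^ (p + 1) := by
    intro c s hc
    rw [← sq_abs, Real.mul_rpow (Real.rpow_nonneg hc e) (by positivity),
      ← Real.rpow_mul hc, her, Real.rpow_one,
      ← Real.rpow_natCast |s| 2, ← Real.rpow_mul (abs_nonneg s), hpr]
  -- value of spow products
  have hms : ∀ s : ℝ, s * spow s p = |s| ^ (p + 1) := fun s => mul_spow s p hp0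
  -- symmetrization of the interaction term
  have hsym : ∀ k : Fin q,
      (∑ i, ∑ j, A i j * (x i k * spow (x i k - x j k) p))
        = (1/2) * ∑ i, ∑ j, A i j * |x i k - x j k| ^ (p + 1) := by
    intro k
    have hswap : (∑ i, ∑ j, A i j * (x i k * spow (x i k - x j k) p))
        = ∑ i, ∑ j, A i j * (x j k * (- spow (x i k - x j k) p)) := by
      rw [Finset.sum_comm]
      refine Finset.sum_congr rfl fun i _ => Finset.sum_congr rfl fun j _ => ?_
      rw [hAs, show x i k - x j k = -(x j k - x i k) by ring, spow_neg, neg_neg]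
    have h2P : (∑ i, ∑ j, A i j * (x i k * spow (x i k - x j k) p))
          + (∑ i, ∑ j, A i j * (x i k * spow (x i k - x j k) p))
        = ∑ i, ∑ j, A i j * |x i k - x j k| ^ (p + 1) := by
      nth_rewrite 2 [hswap]
      rw [← Finset.sum_add_distrib]
      refine Finset.sum_congr rfl fun i _ => ?_
      rw [← Finset.sum_add_distrib]
      refine Finset.sum_congr rfl fun j _ => ?_
      rw [← hms (x i k - x j k)]
      ring
    linarith
  -- rewrite the left-hand side
  have hLHS : (∑ i, ∑ k, x i k *
        ((∑ j, A i j * spow (x i k - x j k) p) + d i * spow (x i k) p))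
      = (1/2) * ((∑ i, ∑ j, ∑ k, A i j * |x i k - x j k| ^ (p + 1))
          + 2 * ∑ i, ∑ k, d i * |x i k| ^ (p + 1)) := by
    have expand : ∀ i k, x i k *
          ((∑ j, A i j * spow (x i k - x j k) p) + d i * spow (x i k) p)
        = (∑ j, A i j * (x i k * spow (x i k - x j k) p))
          + d i * (x i k * spow (x i k) p) := by
      intro i k
      rw [mul_add, Finset.mul_sum]
      congr 1
      · exact Finset.sum_congr rfl fun j _ => by ring
      · ring
    calc (∑ i, ∑ k, x i k *
          ((∑ j, A i j * spow (x i k - x j k) p) + d i * spow (x i k) p))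
        = (∑ k, ∑ i, ∑ j, A i j * (x i k * spow (x i k - x j k) p))
          + ∑ i, ∑ k, d i * (x i k * spow (x i k) p) := by
          simp_rw [expand, Finset.sum_add_distrib]
          rw [Finset.sum_comm]
      _ = (∑ k, (1/2) * ∑ i, ∑ j, A i j * |x i k - x j k| ^ (p + 1))
          + ∑ i, ∑ k, d i * |x i k| ^ (p + 1) := by
          simp_rw [hsym, hms]
      _ = (1/2) * ((∑ i, ∑ j, ∑ k, A i j * |x i k - x j k| ^ (p + 1))
          + 2 * ∑ i, ∑ k, d i * |x i k| ^ (p + 1)) := by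
          rw [← Finset.mul_sum]
          rw [show (∑ k, ∑ i, ∑ j, A i j * |x i k - x j k| ^ (p + 1))
            = ∑ i, ∑ j, ∑ k, A i j * |x i k - x j k| ^ (p + 1) by
              rw [Finset.sum_comm]
              exact Finset.sum_congr rfl fun i _ => Finset.sum_comm]
          ring
  -- the total quadratic form equals the sum of w
  have hT : (2 * ((1 / 2) * (∑ i, ∑ j, A i j ^ e * (∑ k, (x i k - x j k) ^ 2))
        + ∑ i, d i ^ e * (∑ k, (x i k) ^ 2))) = ∑ m, w m := by
    have hmulA : ∀ i j : Fin N, A i j ^ e * (∑ k, (x i k - x j k) ^ 2)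
        = ∑ k, A i j ^ e * (x i k - x j k) ^ 2 := fun i j => Finset.mul_sum _ _ _
    have hmuld : ∀ i : Fin N, d i ^ e * (∑ k, (x i k) ^ 2)
        = ∑ k, d i ^ e * (x i k) ^ 2 := fun i => Finset.mul_sum _ _ _
    simp_rw [hmulA, hmuld]
    rw [hwdef]
    simp only [Fintype.sum_sum_type, Sum.elim_inl, Sum.elim_inr,
      Fintype.sum_prod_type, Fintype.sum_bool]
    ring
  -- sum of w ^ r equals twice the LHS
  have hwr : (∑ m, (w m) ^ r)
      = (∑ i, ∑ j, ∑ k, A i j * |x i k - x j k| ^ (p + 1))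
        + 2 * ∑ i, ∑ k, d i * |x i k| ^ (p + 1) := by
    rw [hwdef]
    simp only [Fintype.sum_sum_type, Sum.elim_inl, Sum.elim_inr,
      Fintype.sum_prod_type, Fintype.sum_bool]
    simp_rw [hterm _ _ (hA _ _), hterm _ _ (hd _)]
    ring
  set M : ℝ := (q : ℝ) * ((N : ℝ) + 1) ^ 2 with hMdef
  have hM0 : 0 < M := by
    have : (1:ℝ) ≤ q := by exact_mod_cast hq
    positivity
  have hNR : (1:ℝ) ≤ N := by exact_mod_cast hN
  have hqR : (1:ℝ) ≤ q := by exact_mod_cast hq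
  have hcard : (Fintype.card ((Fin N × Fin N × Fin q) ⊕ (Bool × Fin N × Fin q)) : ℝ) ≤ M := by
    simp [Fintype.card_sum, Fintype.card_prod, hMdef]
    push_cast
    nlinarith [hNR, hqR]
  have hc0 : 0 < Fintype.card ((Fin N × Fin N × Fin q) ⊕ (Bool × Fin N × Fin q)) :=
    Fintype.card_pos_iff.mpr ⟨Sum.inr ⟨true, ⟨0, hN⟩, ⟨0, hq⟩⟩⟩
  have hbound := sum_rpow_bound w hw0 hr1 hc0 hcard
  -- final exponent identity
  have h1r : ((a:ℝ) - b) / (2 * b) = 1 - r := by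
    rw [hrdef]; field_simp; ring
  rw [ge_iff_le, hLHS, hT, h1r]
  have key : M ^ (1 - r) * (∑ m, w m) ^ r ≤ ∑ m, (w m) ^ r := by
    calc M ^ (1 - r) * (∑ m, w m) ^ r
        ≤ M ^ (1 - r) * (M ^ (r - 1) * ∑ m, (w m) ^ r) :=
          mul_le_mul_of_nonneg_left hbound (Real.rpow_nonneg hM0.le _)
      _ = (M ^ (1 - r) * M ^ (r - 1)) * ∑ m, (w m) ^ r := by ring
      _ = ∑ m, (w m) ^ r := by
          rw [← Real.rpow_add hM0]
          norm_num
  calc (1/2) * M ^ (1 - r) * (∑ m, w m) ^ r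
      = (1/2) * (M ^ (1 - r) * (∑ m, w m) ^ r) := by ring
    _ ≤ (1/2) * (∑ m, (w m) ^ r) := by linarith
    _ = (1/2) * ((∑ i, ∑ j, ∑ k, A i j * |x i k - x j k| ^ (p + 1))
        + 2 * ∑ i, ∑ k, d i * |x i k| ^ (p + 1)) := by rw [hwr]
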